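/- arXiv:1412.4703 — 4 statements merged into one kernel-verified Lean document; each statement's English description precedes it below -/
import Mathlib

section
/- If f is a non-constant polynomial with complex coefficients, then every root of its derivative f' lies in the convex hull of the set of roots of f. -/
open Polynomial

theorem gauss_lucas (f : Polynomial ℂ) (hf : 1 ≤ f.natDegree)
    (z : ℂ) (hz : f.derivative.IsRoot z) :
    z ∈ convexHull ℝ (f.roots.toFinset : Set ℂ) := by
  classical
  have hf0 : f ≠ 0 := fun h => by simp [h] at hf
  by_cases hroot : f.IsRoot z
  · exact subset_convexHull ℝ _ (by simp only [Finset.coe_sort_coe, Multiset.mem_toFinset, Finset.mem_coe]; exact (mem_roots hf0).mpr hroot)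
  set R := f.roots with hR
  set c := f.leadingCoeff with hc
  have hsplits : f.Splits := IsAlgClosed.splits f
  have hfeq : f = C c * (R.map fun a => X - C a).prod := hsplits.eq_prod_roots
  have hc0 : c ≠ 0 := leadingCoeff_ne_zero.mpr hf0
  have hzr : ∀ a ∈ R, z - a ≠ 0 := by
    intro a ha h
    rw [sub_eq_zero] at h
    exact hroot (h ▸ isRoot_of_mem_roots ha)
  set P := (R.map fun a => z - a).prod with hPdef
  have hPne : P ≠ 0 := by
    rw [hPdef]
    apply Multiset.prod_ne_zero
    simp only [Multiset.mem_map]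
    rintro ⟨a, ha, h⟩
    exact hzr a ha h
  have key : (R.map fun a => (z - a)⁻¹).sum = 0 := by
    have h1 : eval z (derivative f) = 0 := hz
    rw [hfeq, derivative_C_mul, derivative_prod, eval_mul, eval_C] at h1
    have h2 : (R.map fun a => ((R.erase a).map fun b => z - b).prod).sum = 0 := by
      have := mul_eq_zero.mp h1
      rcases this with h | h
      · exact absurd h hc0
      · rw [show (eval z : ℂ[X] → ℂ) = ⇑(evalRingHom z) from rfl,
          map_multiset_sum (evalRingHom z)] at h
        rw [← h]
        congr 1
        rw [Multiset.map_map]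
        apply Multiset.map_congr rfl
        intro a ha
        simp [eval_multiset_prod, Multiset.map_map]
    have h3 : ∀ a ∈ R, ((R.erase a).map fun b => z - b).prod = P * (z - a)⁻¹ := by
      intro a ha
      have h4 : (z - a) * ((R.erase a).map fun b => z - b).prod = P := by
        rw [hPdef, ← Multiset.prod_cons, ← Multiset.map_cons, Multiset.cons_erase ha]
      field_simp [hzr a ha]
      linear_combination h4
    have h5 : P * (R.map fun a => (z - a)⁻¹).sum = 0 := by
      rw [← Multiset.sum_map_mul_left]
      rw [← h2]
      exact congr_arg Multiset.sum (Multiset.map_congr rfl fun a ha => (h3 a ha).symm)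
    exact (mul_eq_zero.mp h5).resolve_left hPne
  set t := R.toFinset with ht
  set w : ℂ → ℝ := fun a => (R.count a : ℝ) / Complex.normSq (z - a) with hwdef
  have hw0 : ∀ a ∈ t, 0 ≤ w a := fun a _ =>
    div_nonneg (Nat.cast_nonneg _) (Complex.normSq_nonneg _)
  have htne : t.Nonempty := by
    rw [ht, Multiset.toFinset_nonempty, hR, ← Multiset.card_pos]
    have h7 := hsplits.natDegree_eq_card_roots
    omega
  have hwpos : 0 < ∑ a ∈ t, w a := by
    obtain ⟨a, ha⟩ := htne
    have haR : a ∈ R := Multiset.mem_toFinset.mp ha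
    refine Finset.sum_pos' hw0 ⟨a, ha, ?_⟩
    apply div_pos
    · exact_mod_cast Nat.cast_pos.mpr (Multiset.count_pos.mpr haR)
    · exact Complex.normSq_pos.mpr (hzr a haR)
  have key2 : ∑ a ∈ t, (R.count a : ℂ) * (z - a)⁻¹ = 0 := by
    rw [Finset.sum_multiset_map_count] at key
    simpa [nsmul_eq_mul] using key
  have hterm : ∀ a, w a • (z - a) = (starRingEnd ℂ) ((R.count a : ℂ) * (z - a)⁻¹) := by
    intro a
    rw [map_mul, map_inv₀, map_natCast, Complex.inv_def, Complex.normSq_conj,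
      Complex.conj_conj, hwdef, Complex.real_smul]
    push_cast
    ring
  have hsum : ∑ a ∈ t, w a • (z - a) = 0 := by
    calc ∑ a ∈ t, w a • (z - a) = (starRingEnd ℂ) (∑ a ∈ t, (R.count a : ℂ) * (z - a)⁻¹) := by
          rw [map_sum]; exact Finset.sum_congr rfl fun a _ => hterm a
      _ = 0 := by rw [key2, map_zero]
  have h6 : (∑ a ∈ t, w a) • z = ∑ a ∈ t, w a • (id a) := by
    simp only [smul_sub] at hsum
    rw [Finset.sum_sub_distrib, sub_eq_zero] at hsum
    rw [Finset.sum_smul]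
    exact hsum
  have hzc : z = t.centerMass w id := by
    rw [Finset.centerMass, ← h6, inv_smul_smul₀ (ne_of_gt hwpos)]
  rw [hzc]
  exact Finset.centerMass_mem_convexHull t hw0 hwpos fun a ha => Finset.mem_coe.mpr ha
end

section
/- Let p be a monic real polynomial of degree n ≥ 2 with all roots real. For any interval I ⊆ ℝ, if N_I denotes the number of roots of p in I (with multiplicity) and N'_I the number of roots of p' in I (with multiplicity), then |N_I − N'_I| ≤ 1. -/
open Polynomial Multiset

open Classical in
lemma lemA (p : ℝ[X]) (hp' : derivative p ≠ 0) (L : Set ℝ) (hL : L.OrdConnected) :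
    Multiset.card (p.roots.filter (fun x => x ∈ L)) ≤
      Multiset.card ((derivative p).roots.filter (fun x => x ∈ L)) + 1 := by
  have hp : p ≠ 0 := ne_of_apply_ne derivative (by rwa [derivative_zero])
  set R := p.roots.filter (fun x => x ∈ L) with hRdef
  set R' := (derivative p).roots.filter (fun x => x ∈ L) with hRdef'
  have h1 : R.toFinset.card ≤ (R'.toFinset \ R.toFinset).card + 1 := by
    refine Finset.card_le_diff_of_interleaved fun x hx y hy hxy hxy' => ?_
    rw [Multiset.mem_toFinset, hRdef, Multiset.mem_filter, mem_roots hp] at hx hy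
    obtain ⟨z, hz1, hz2⟩ := exists_deriv_eq_zero hxy p.continuousOn (hx.1.trans hy.1.symm)
    refine ⟨z, ?_, hz1.1, hz1.2⟩
    rw [Multiset.mem_toFinset, hRdef', Multiset.mem_filter]
    refine ⟨?_, hL.out hx.2 hy.2 ⟨hz1.1.le, hz1.2.le⟩⟩
    rw [mem_roots hp', IsRoot, ← p.deriv]
    exact hz2
  have hmemR : ∀ x ∈ R.toFinset, x ∈ p.roots ∧ x ∈ L := by
    intro x hx
    rwa [Multiset.mem_toFinset, hRdef, Multiset.mem_filter] at hx
  have h2 : ∀ x ∈ R.toFinset, R.count x - 1 ≤ R'.count x := by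
    intro x hx
    obtain ⟨hx1, hx2⟩ := hmemR x hx
    rw [hRdef, Multiset.count_filter_of_pos hx2, hRdef', Multiset.count_filter_of_pos hx2,
      count_roots, count_roots]
    exact p.rootMultiplicity_sub_one_le_derivative_rootMultiplicity x
  calc Multiset.card R = ∑ x ∈ R.toFinset, R.count x := (Multiset.toFinset_sum_count_eq _).symm
    _ = ∑ x ∈ R.toFinset, (R.count x - 1 + 1) :=
      (Finset.sum_congr rfl fun x hx => (tsub_add_cancel_of_le (Nat.succ_le_iff.2
        (Multiset.count_pos.2 (Multiset.mem_toFinset.1 hx)))).symm)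
    _ = (∑ x ∈ R.toFinset, (R.count x - 1)) + R.toFinset.card := by
      simp only [Finset.sum_add_distrib, Finset.card_eq_sum_ones]
    _ ≤ (∑ x ∈ R.toFinset, R'.count x) + ((R'.toFinset \ R.toFinset).card + 1) :=
      add_le_add (Finset.sum_le_sum h2) h1
    _ ≤ (∑ x ∈ R.toFinset, R'.count x) +
        ((∑ x ∈ R'.toFinset \ R.toFinset, R'.count x) + 1) := by
      refine add_le_add_right (add_le_add_left ((Finset.card_eq_sum_ones _).trans_le ?_) _) _
      refine Finset.sum_le_sum fun x hx => Nat.succ_le_iff.2 ?_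
      rw [Multiset.count_pos, ← Multiset.mem_toFinset]
      exact (Finset.mem_sdiff.1 hx).1
    _ = Multiset.card R' + 1 := by
      rw [← add_assoc, ← Finset.sum_union Finset.disjoint_sdiff,
        Finset.union_sdiff_self_eq_union, ← Multiset.toFinset_sum_count_eq,
        ← Finset.sum_subset Finset.subset_union_right]
      intro x _ hx₂
      simpa only [Multiset.mem_toFinset, Multiset.count_eq_zero] using hx₂

open Classical in
lemma card_split (s : Multiset ℝ) (P : ℝ → Prop) :
    Multiset.card (s.filter P) + Multiset.card (s.filter (fun x => ¬ P x)) =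
      Multiset.card s := by
  rw [← Multiset.card_add]
  congr 1
  convert Multiset.filter_add_not P s using 2

open Classical in
lemma lemB (p : ℝ[X]) (n : ℕ) (hn : 2 ≤ n) (hd : p.natDegree = n)
    (hs : p.Splits) (L : Set ℝ)
    (hdc : ∀ ⦃x y : ℝ⦄, x ∈ L → y ≤ x → y ∈ L) :
    Multiset.card ((derivative p).roots.filter (fun x => x ∈ L)) ≤
      Multiset.card (p.roots.filter (fun x => x ∈ L)) := by
  have hp : p ≠ 0 := fun h => by simp [h] at hd; omega
  have hp' : derivative p ≠ 0 := by
    intro h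
    have := natDegree_eq_zero_of_derivative_eq_zero h
    omega
  have hcp : Multiset.card p.roots = n := by
    rw [(splits_iff_card_roots).mp hs, hd]
  have hcp' : Multiset.card (derivative p).roots = n - 1 := by
    have h1 : Multiset.card (derivative p).roots ≤ n - 1 := by
      have := (derivative p).card_roots' 
      have h2 := natDegree_derivative_lt (p := p) (by omega)
      omega
    have h2 := p.card_roots_le_derivative
    omega
  -- complement set, kept opaque so classical decidability instances line up
  obtain ⟨L', hL'eq⟩ : ∃ L'' : Set ℝ, ∀ x, x ∈ L'' ↔ x ∉ L := ⟨{x | x ∉ L}, fun _ => Iff.rfl⟩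
  have hL'oc : L'.OrdConnected := by
    constructor
    intro x hx y hy z hz
    rw [hL'eq] at hx ⊢
    intro hzL
    exact hx (hdc hzL hz.1)
  have hA := lemA p hp' L' hL'oc
  have key : ∀ s : Multiset ℝ, Multiset.card (s.filter (fun x => x ∈ L)) +
      Multiset.card (s.filter (fun x => x ∈ L')) = Multiset.card s := by
    intro s
    have h1 : (s.filter (fun x => x ∈ L')) = (s.filter (fun x => ¬ x ∈ L)) := by
      apply Multiset.filter_congr; intro x _; exact hL'eq x
    rw [h1, ← Multiset.card_add]
    congr 1
    convert Multiset.filter_add_not (fun x => x ∈ L) s using 2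
  have e1 := key p.roots
  have e2 := key (derivative p).roots
  omega

open Classical in
lemma dc_ordConnected (L : Set ℝ) (hdc : ∀ ⦃x y : ℝ⦄, x ∈ L → y ≤ x → y ∈ L) :
    L.OrdConnected := by
  constructor
  intro x _ y hy z hz
  exact hdc hy hz.2

open Classical in
theorem interlacing_count (n : ℕ) (hn : 2 ≤ n) (p : Polynomial ℝ) (hm : p.Monic)
    (hd : p.natDegree = n) (hs : p.Splits)
    (I : Set ℝ) (hI : I.OrdConnected) :
    |((p.roots.filter (fun x => x ∈ I)).card : ℤ)
      - ((p.derivative.roots.filter (fun x => x ∈ I)).card : ℤ)| ≤ 1 := by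
  have hp' : derivative p ≠ 0 := by
    intro h
    have := natDegree_eq_zero_of_derivative_eq_zero h
    omega
  rcases Set.eq_empty_or_nonempty I with hIe | ⟨y0, hy0⟩
  · have h1 : Multiset.card (p.roots.filter (fun x => x ∈ I)) = 0 := by
      rw [Multiset.card_eq_zero]
      exact Multiset.filter_eq_nil.mpr (fun a _ ha => by rw [hIe] at ha; exact ha)
    have h2 : Multiset.card ((derivative p).roots.filter (fun x => x ∈ I)) = 0 := by
      rw [Multiset.card_eq_zero]
      exact Multiset.filter_eq_nil.mpr (fun a _ ha => by rw [hIe] at ha; exact ha)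
    rw [h1, h2]
    norm_num
  obtain ⟨D, hD⟩ : ∃ D : Set ℝ, ∀ x, x ∈ D ↔ ∃ y ∈ I, x ≤ y :=
    ⟨{x | ∃ y ∈ I, x ≤ y}, fun _ => Iff.rfl⟩
  obtain ⟨E, hE⟩ : ∃ E : Set ℝ, ∀ x, x ∈ E ↔ ∀ y ∈ I, ¬ y ≤ x :=
    ⟨{x | ∀ y ∈ I, ¬ y ≤ x}, fun _ => Iff.rfl⟩
  have hDdc : ∀ ⦃x y : ℝ⦄, x ∈ D → y ≤ x → y ∈ D := by
    intro x y hx hyx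
    rw [hD] at hx ⊢
    obtain ⟨z, hz1, hz2⟩ := hx
    exact ⟨z, hz1, hyx.trans hz2⟩
  have hEdc : ∀ ⦃x y : ℝ⦄, x ∈ E → y ≤ x → y ∈ E := by
    intro x y hx hyx
    rw [hE] at hx ⊢
    intro z hz hzy
    exact hx z hz (hzy.trans hyx)
  -- D = I ⊔ E pointwise
  have hsplit : ∀ x : ℝ, (x ∈ I ∨ x ∈ E ↔ x ∈ D) ∧ ¬ (x ∈ I ∧ x ∈ E) := by
    intro x
    constructor
    · constructor
      · rintro (hx | hx)
        · exact (hD x).mpr ⟨x, hx, le_refl x⟩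
        · exact (hD x).mpr ⟨y0, hy0, le_of_not_ge ((hE x).mp hx y0 hy0)⟩
      · intro hx
        by_cases hxE : x ∈ E
        · exact Or.inr hxE
        · left
          rw [hE] at hxE
          push_neg at hxE
          obtain ⟨a, ha, hax⟩ := hxE
          obtain ⟨b, hb, hxb⟩ := (hD x).mp hx
          exact hI.out ha hb ⟨hax, hxb⟩
    · rintro ⟨hxI, hxE⟩
      exact (hE x).mp hxE x hxI (le_refl x)
  have key : ∀ s : Multiset ℝ, Multiset.card (s.filter (fun x => x ∈ D)) =
      Multiset.card (s.filter (fun x => x ∈ I)) + Multiset.card (s.filter (fun x => x ∈ E)) := by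
    intro s
    rw [← Multiset.card_add, Multiset.filter_add_filter]
    have h0 : (s.filter (fun x => x ∈ I ∧ x ∈ E)) = 0 :=
      Multiset.filter_eq_nil.mpr (fun a _ => (hsplit a).2)
    rw [h0, add_zero]
    congr 1
    apply Multiset.filter_congr
    intro x _
    exact ((hsplit x).1).symm
  have hAD := lemA p hp' D (dc_ordConnected D hDdc)
  have hAE := lemA p hp' E (dc_ordConnected E hEdc)
  have hBD := lemB p n hn hd hs D hDdc
  have hBE := lemB p n hn hd hs E hEdc
  have e1 := key p.roots
  have e2 := key (derivative p).roots
  rw [abs_sub_le_iff]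
  constructor <;> omega
end

section
/- Let n ≥ 2 and let x₁, …, xₙ ∈ ℂ be the roots of p(z) = ∏ⱼ (z − xⱼ). Then the (n−1)×(n−1) matrix D(I − (1/n)J) + (xₙ/n)J, where D = diag(x₁,…,x_{n−1}), I is the identity, and J is the all-ones matrix, has characteristic polynomial equal to (1/n)·p'(z); equivalently its eigenvalues (with multiplicity) are exactly the critical points of p. -/
open Polynomial Matrix

private lemma eval_charpoly'' {N : ℕ} (M : Matrix (Fin N) (Fin N) ℂ) (z : ℂ) :
    eval z M.charpoly = (Matrix.diagonal (fun _ => z) - M).det := by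
  rw [Matrix.charpoly]
  rw [show (eval z : ℂ[X] → ℂ) = (evalRingHom z : ℂ[X] →+* ℂ) from rfl]
  rw [RingHom.map_det]
  congr 1
  ext i j
  by_cases h : i = j
  · subst h
    simp [charmatrix_apply_eq]
  · simp [charmatrix_apply_ne _ _ _ h, Matrix.diagonal_apply_ne _ h]


private lemma derivative_fin_prod {ι : Type*} [DecidableEq ι] (s : Finset ι) (f : ι → ℂ[X]) :
    Polynomial.derivative (∏ i ∈ s, f i)
      = ∑ i ∈ s, (∏ j ∈ s.erase i, f j) * Polynomial.derivative (f i) := by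
  induction s using Finset.induction_on with
  | empty => simp
  | @insert a s ha ih =>
    rw [Finset.prod_insert ha, derivative_mul, Finset.sum_insert ha, ih, Finset.erase_insert ha,
      Finset.mul_sum, mul_comm (derivative (f a))]
    congr 1
    refine Finset.sum_congr rfl fun i hi => ?_
    rw [Finset.erase_insert_of_ne (by rintro rfl; exact ha hi),
      Finset.prod_insert (fun h => ha (Finset.mem_of_mem_erase h)), mul_assoc]

theorem companion_critical_points (n : ℕ) (hn : 2 ≤ n) (x : Fin n → ℂ) :
    (Matrix.diagonal (fun i : Fin (n - 1) => x (Fin.castLE (Nat.sub_le n 1) i)) *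
        ((1 : Matrix (Fin (n - 1)) (Fin (n - 1)) ℂ)
          - (n : ℂ)⁻¹ • (Matrix.of fun _ _ => (1 : ℂ)))
      + (x ⟨n - 1, Nat.sub_lt (by omega) one_pos⟩ / n) • (Matrix.of fun _ _ => (1 : ℂ))).charpoly
    = Polynomial.C ((n : ℂ)⁻¹)
        * Polynomial.derivative (∏ j, (Polynomial.X - Polynomial.C (x j))) := by
  obtain ⟨m, rfl⟩ : ∃ m, n = m + 1 := ⟨n - 1, by omega⟩
  show (Matrix.diagonal (fun i : Fin m => x (Fin.castLE (Nat.le_succ m) i)) *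
        ((1 : Matrix (Fin m) (Fin m) ℂ)
          - (((m+1 : ℕ) : ℂ))⁻¹ • (Matrix.of fun _ _ => (1 : ℂ)))
      + (x (Fin.last m) / ((m+1 : ℕ) : ℂ)) • (Matrix.of fun _ _ => (1 : ℂ))).charpoly
    = Polynomial.C (((m+1 : ℕ) : ℂ))⁻¹
        * Polynomial.derivative (∏ j, (Polynomial.X - Polynomial.C (x j)))
  have hy : ∀ i : Fin m, x (Fin.castLE (Nat.le_succ m) i) = x i.castSucc := fun i => rfl
  set y : Fin m → ℂ := fun i => x i.castSucc with hydef
  set a : ℂ := x (Fin.last m) with hadef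
  have hN : ((m:ℂ) + 1) ≠ 0 := Nat.cast_add_one_ne_zero m
  apply Polynomial.eq_of_infinite_eval_eq
  apply Set.Infinite.mono (s := (Set.range x)ᶜ)
  swap
  · exact (Set.finite_range x).infinite_compl
  intro z hz
  simp only [Set.mem_compl_iff, Set.mem_range, not_exists] at hz
  have hz' : ∀ j : Fin (m+1), z - x j ≠ 0 := fun j => sub_ne_zero.mpr (fun h => hz j h.symm)
  simp only [Set.mem_setOf_eq]
  have hd : ∀ i : Fin m, z - y i ≠ 0 := fun i => hz' i.castSucc
  have hb : z - a ≠ 0 := hz' (Fin.last m)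
  rw [eval_charpoly'']
  have hM : Matrix.diagonal (fun _ : Fin m => z)
      - (Matrix.diagonal (fun i : Fin m => x (Fin.castLE (Nat.le_succ m) i)) *
        ((1 : Matrix (Fin m) (Fin m) ℂ)
          - (((m+1 : ℕ) : ℂ))⁻¹ • (Matrix.of fun _ _ => (1 : ℂ)))
      + (a / ((m+1 : ℕ) : ℂ)) • (Matrix.of fun _ _ => (1 : ℂ)))
      = Matrix.diagonal (fun i : Fin m => z - y i) *
          (1 + Matrix.replicateCol Unit (fun i => ((y i - a) / ((m:ℂ)+1)) / (z - y i)) *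
            Matrix.replicateRow Unit (fun _ => (1 : ℂ))) := by
    ext i j
    simp only [Matrix.sub_apply, Matrix.add_apply, Matrix.smul_apply, Matrix.diagonal_mul,
      Matrix.of_apply, smul_eq_mul, hy]
    simp only [Matrix.mul_apply, Matrix.sub_apply, Matrix.add_apply, Matrix.one_apply,
      Matrix.replicateCol_apply, Matrix.replicateRow_apply, Matrix.diagonal_apply, Finset.sum_const,
      Finset.card_univ, Fintype.card_unit, one_smul, mul_one]
    push_cast
    have hdi := hd i
    by_cases h : i = j
    · subst h
      simp only [if_pos rfl, if_true]
      field_simp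
      ring
    · simp only [if_neg h]
      field_simp
      ring
  rw [hM, Matrix.det_mul, Matrix.det_diagonal, Matrix.det_one_add_replicateCol_mul_replicateRow]
  -- derivative side
  rw [derivative_fin_prod]
  simp only [derivative_sub, derivative_X, derivative_C, sub_zero, mul_one, eval_mul, eval_C,
    eval_finset_sum, eval_prod, eval_sub, eval_X]
  have herase : ∀ j : Fin (m+1), (∏ k ∈ Finset.univ.erase j, (z - x k))
      = (∏ k, (z - x k)) / (z - x j) := by
    intro j
    rw [eq_div_iff (hz' j)]
    exact Finset.prod_erase_mul _ _ (Finset.mem_univ j)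
  simp only [herase]
  rw [Fin.sum_univ_castSucc, Fin.prod_univ_castSucc]
  set Q := ∏ i : Fin m, (z - y i) with hQ
  have hQ0 : Q ≠ 0 := Finset.prod_ne_zero_iff.mpr fun i _ => hd i
  simp only [dotProduct, one_mul]
  have key : ∀ i : Fin m, Q * (((y i - a) / ((m:ℂ)+1)) / (z - y i))
      = ((m:ℂ)+1)⁻¹ * (Q * (z - a) / (z - y i) - Q) := by
    intro i
    have hdi := hd i
    field_simp
    ring
  rw [mul_add, mul_one, Finset.mul_sum]
  simp only [key]
  rw [← Finset.mul_sum, Finset.sum_sub_distrib, Finset.sum_const, Finset.card_univ,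
    Fintype.card_fin, mul_div_assoc, div_self hb, mul_one, nsmul_eq_mul]
  push_cast
  simp only [div_eq_mul_inv, Finset.sum_mul, ← mul_div_assoc] at *
  set S := ∑ i : Fin m, Q * (z - a) * (z - y i)⁻¹ with hS
  field_simp
  ring
end

section
/- Let n ≥ 2, let x₁, …, xₙ ∈ ℂ with |xⱼ| ≤ τ for all j, and let y₁, …, y_{n−1} be the critical points of p(z) = ∏ⱼ (z − xⱼ) (listed with multiplicity). Then for every integer k ≥ 1 there is a constant C depending only on τ and k such that |(1/n)∑ⱼ xⱼᵏ − (1/(n−1))∑ⱼ yⱼᵏ| ≤ C/(n−1). -/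
open Polynomial PowerSeries Finset



noncomputable def geomPS (c : ℂ) : ℂ⟦X⟧ := PowerSeries.mk fun t => c ^ t

lemma one_sub_mul_geomPS (c : ℂ) :
    ((1 - Polynomial.C c * Polynomial.X : ℂ[X]) : ℂ⟦X⟧) * geomPS c = 1 := by
  have : ((1 - Polynomial.C c * Polynomial.X : ℂ[X]) : ℂ⟦X⟧)
      = 1 - PowerSeries.C c * PowerSeries.X := by
    push_cast
    simp
  rw [this, sub_mul, one_mul, mul_assoc]
  ext d
  cases d with
  | zero => simp [geomPS]
  | succ d =>
      simp [geomPS, PowerSeries.coeff_succ_X_mul, PowerSeries.coeff_C_mul, pow_succ, mul_comm]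

lemma derivative_finset_prod {ι : Type*} [DecidableEq ι] (s : Finset ι) (f : ι → ℂ[X]) :
    derivative (∏ i ∈ s, f i) = ∑ i ∈ s, (∏ j ∈ s.erase i, f j) * derivative (f i) := by
  rw [Finset.prod_eq_multiset_prod, Polynomial.derivative_prod, Finset.sum_eq_multiset_sum]
  congr 1

lemma sum_prod_erase (m : ℕ) (z : Fin m → ℂ) :
    ∑ j, ∏ i ∈ univ.erase j, (1 - Polynomial.C (z i) * Polynomial.X) =
      (m : ℂ[X]) * ∏ j, (1 - Polynomial.C (z j) * Polynomial.X)
        - Polynomial.X * derivative (∏ j, (1 - Polynomial.C (z j) * Polynomial.X)) := by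
  have hP : ∀ j : Fin m, (∏ i, (1 - Polynomial.C (z i) * Polynomial.X)) =
      (1 - Polynomial.C (z j) * Polynomial.X) *
        ∏ i ∈ univ.erase j, (1 - Polynomial.C (z i) * Polynomial.X) :=
    fun j => (Finset.mul_prod_erase univ _ (mem_univ j)).symm
  have hm : (m : ℂ[X]) * ∏ j, (1 - Polynomial.C (z j) * Polynomial.X)
      = ∑ _j : Fin m, ∏ j, (1 - Polynomial.C (z j) * Polynomial.X) := by
    rw [Finset.sum_const, card_univ, Fintype.card_fin, nsmul_eq_mul]
  rw [derivative_finset_prod, hm, Finset.mul_sum, ← Finset.sum_sub_distrib]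
  refine Finset.sum_congr rfl fun j _ => ?_
  have hd : Polynomial.derivative (1 - Polynomial.C (z j) * Polynomial.X) = - Polynomial.C (z j) := by
    simp
  rw [hd, hP j]
  ring

lemma mk_sum_geom (m : ℕ) (z : Fin m → ℂ) :
    PowerSeries.mk (fun t => ∑ j, z j ^ t) = ∑ j, geomPS (z j) := by
  ext d
  simp [geomPS]

lemma key_prod_mul_mk (m : ℕ) (z : Fin m → ℂ) :
    ((∏ j, (1 - Polynomial.C (z j) * Polynomial.X) : ℂ[X]) : ℂ⟦X⟧) *
      PowerSeries.mk (fun t => ∑ j, z j ^ t) =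
    (((m : ℂ[X]) * (∏ j, (1 - Polynomial.C (z j) * Polynomial.X))
      - Polynomial.X * Polynomial.derivative (∏ j, (1 - Polynomial.C (z j) * Polynomial.X))
        : ℂ[X]) : ℂ⟦X⟧) := by
  rw [mk_sum_geom, Finset.mul_sum]
  have step : ∀ j : Fin m,
      ((∏ i, (1 - Polynomial.C (z i) * Polynomial.X) : ℂ[X]) : ℂ⟦X⟧) * geomPS (z j)
      = ((∏ i ∈ univ.erase j, (1 - Polynomial.C (z i) * Polynomial.X) : ℂ[X]) : ℂ⟦X⟧) := by
    intro j
    have hP : (∏ i, (1 - Polynomial.C (z i) * Polynomial.X)) =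
        (1 - Polynomial.C (z j) * Polynomial.X) *
          ∏ i ∈ univ.erase j, (1 - Polynomial.C (z i) * Polynomial.X) :=
      (Finset.mul_prod_erase univ _ (mem_univ j)).symm
    rw [hP, Polynomial.coe_mul, mul_comm ((1 - Polynomial.C (z j) * Polynomial.X : ℂ[X]) : ℂ⟦X⟧),
      mul_assoc, one_sub_mul_geomPS, mul_one]
  rw [Finset.sum_congr rfl fun j _ => step j, ← sum_prod_erase]
  rw [← Polynomial.coeToPowerSeries.ringHom_apply, map_sum]
  rfl



lemma derivEqAux (n : ℕ) (hn : 2 ≤ n) (x : Fin n → ℂ) (y : Fin (n-1) → ℂ)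
    (hy : (Multiset.map y Finset.univ.val : Multiset ℂ)
      = (Polynomial.derivative (∏ j, (Polynomial.X - Polynomial.C (x j)))).roots) :
    Polynomial.derivative (∏ j, (Polynomial.X - Polynomial.C (x j)))
      = Polynomial.C (n : ℂ) * ∏ j, (Polynomial.X - Polynomial.C (y j)) := by
  set p : ℂ[X] := ∏ j, (Polynomial.X - Polynomial.C (x j)) with hp
  have hmonic : p.Monic := monic_prod_of_monic _ _ (fun j _ => monic_X_sub_C _)
  have hdeg : p.natDegree = n := by
    rw [hp, natDegree_prod_of_monic _ _ (fun j _ => monic_X_sub_C _)]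
    simp
  have hderivdeg : (Polynomial.derivative p).natDegree = n - 1 := by
    have h0 : 0 < p.natDegree := by rw [hdeg]; omega
    have hd := Polynomial.degree_derivative_eq p h0
    rw [hdeg] at hd
    exact Polynomial.natDegree_eq_of_degree_eq_some hd
  have hlead : (Polynomial.derivative p).leadingCoeff = (n : ℂ) := by
    rw [Polynomial.leadingCoeff, hderivdeg, Polynomial.coeff_derivative]
    have h1 : n - 1 + 1 = n := by omega
    rw [h1]
    have h2 : p.coeff n = 1 := by
      rw [← hdeg]; exact hmonic.coeff_natDegree
    rw [h2]
    rw [Nat.cast_sub (by omega : 1 ≤ n)]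
    push_cast
    ring
  have hsplit := IsAlgClosed.splits
    (Polynomial.derivative p)
  have := hsplit.eq_prod_roots
  rw [hlead, ← hy, Multiset.map_map] at this
  rw [this]
  congr 1

lemma claimA (n : ℕ) (hn : 2 ≤ n) (x : Fin n → ℂ) (y : Fin (n-1) → ℂ)
    (hq : Polynomial.derivative (∏ j, (Polynomial.X - Polynomial.C (x j)))
      = Polynomial.C (n : ℂ) * ∏ j, (Polynomial.X - Polynomial.C (y j))) :
    ∑ j : Fin n, ∏ i ∈ univ.erase j, (1 - Polynomial.C (x i) * Polynomial.X)
      = (n : ℂ[X]) * ∏ j : Fin (n-1), (1 - Polynomial.C (y j) * Polynomial.X) := by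
  apply Polynomial.funext
  intro u
  simp only [Polynomial.eval_finset_sum, Polynomial.eval_prod, Polynomial.eval_mul,
    Polynomial.eval_sub, Polynomial.eval_one, Polynomial.eval_C, Polynomial.eval_X,
    Polynomial.eval_natCast]
  by_cases hu : u = 0
  · simp [hu, Finset.card_erase_of_mem]
  · have hv := congrArg (Polynomial.eval u⁻¹) hq
    rw [derivative_finset_prod] at hv
    simp only [Polynomial.eval_finset_sum, Polynomial.eval_mul, Polynomial.eval_prod,
      Polynomial.eval_sub, Polynomial.eval_X, Polynomial.eval_C, Polynomial.derivative_sub,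
      Polynomial.derivative_X, Polynomial.derivative_C, sub_zero, Polynomial.eval_one,
      mul_one] at hv
    have key : ∀ (c : ℂ), u * (u⁻¹ - c) = 1 - c * u := by
      intro c
      field_simp
    calc ∑ j : Fin n, ∏ i ∈ univ.erase j, (1 - x i * u)
        = ∑ j : Fin n, ∏ i ∈ univ.erase j, (u * (u⁻¹ - x i)) := by
          refine Finset.sum_congr rfl fun j _ => Finset.prod_congr rfl fun i _ => (key _).symm
      _ = ∑ j : Fin n, (u ^ (n-1) * ∏ i ∈ univ.erase j, (u⁻¹ - x i)) := by
          refine Finset.sum_congr rfl fun j _ => ?_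
          rw [Finset.prod_mul_distrib, Finset.prod_const, Finset.card_erase_of_mem (mem_univ j),
            card_univ, Fintype.card_fin]
      _ = u ^ (n-1) * ∑ j : Fin n, ∏ i ∈ univ.erase j, (u⁻¹ - x i) := by
          rw [Finset.mul_sum]
      _ = u ^ (n-1) * ((n : ℂ) * ∏ j : Fin (n-1), (u⁻¹ - y j)) := by rw [hv]
      _ = (n : ℂ) * ∏ j : Fin (n-1), (u * (u⁻¹ - y j)) := by
          rw [Finset.prod_mul_distrib, Finset.prod_const, card_univ, Fintype.card_fin]
          ring
      _ = (n : ℂ) * ∏ j : Fin (n-1), (1 - y j * u) := by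
          rw [Finset.prod_congr rfl fun j _ => key (y j)]

lemma FG_identity (n : ℕ) (hn : 2 ≤ n) (x : Fin n → ℂ) (y : Fin (n-1) → ℂ)
    (hq : Polynomial.derivative (∏ j, (Polynomial.X - Polynomial.C (x j)))
      = Polynomial.C (n : ℂ) * ∏ j, (Polynomial.X - Polynomial.C (y j))) :
    (PowerSeries.mk (fun t => ∑ j, x j ^ t) : ℂ⟦X⟧) * PowerSeries.mk (fun t => ∑ j, y j ^ t)
      = PowerSeries.mk (fun t => ∑ j, x j ^ t) * PowerSeries.mk (fun t => ∑ j, x j ^ t)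
        - PowerSeries.mk (fun t => ∑ j, x j ^ t)
        - PowerSeries.X * (d⁄dX ℂ (PowerSeries.mk (fun t => ∑ j, x j ^ t))) := by
  set P : ℂ[X] := ∏ j, (1 - Polynomial.C (x j) * Polynomial.X) with hPdef
  set R : ℂ[X] := ∏ j, (1 - Polynomial.C (y j) * Polynomial.X) with hRdef
  set F : ℂ⟦X⟧ := PowerSeries.mk (fun t => ∑ j, x j ^ t) with hFdef
  set G : ℂ⟦X⟧ := PowerSeries.mk (fun t => ∑ j, y j ^ t) with hGdef
  set dF : ℂ⟦X⟧ := d⁄dX ℂ F with hdFdef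
  -- polynomial identity A
  have hA : (n : ℂ[X]) * P - Polynomial.X * Polynomial.derivative P = (n : ℂ[X]) * R := by
    rw [← sum_prod_erase]; exact claimA n hn x y hq
  -- power series identities
  have h1 : (P : ℂ⟦X⟧) * F = ((n : ℂ[X]) * R : ℂ[X]) := by
    rw [key_prod_mul_mk n x, hA]
  have hn1 : ((n - 1 : ℕ) : ℂ[X]) = (n : ℂ[X]) - 1 := by
    rw [Nat.cast_sub (by omega : 1 ≤ n)]; simp
  have h2 : (R : ℂ⟦X⟧) * G
      = (((n : ℂ[X]) - 1) * R - Polynomial.X * Polynomial.derivative R : ℂ[X]) := by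
    rw [key_prod_mul_mk (n-1) y, hn1]
  -- differentiate h1
  have h4 : ((Polynomial.derivative P : ℂ[X]) : ℂ⟦X⟧) * F + (P : ℂ⟦X⟧) * dF
      = (n : ℂ⟦X⟧) * ((Polynomial.derivative R : ℂ[X]) : ℂ⟦X⟧) := by
    have := congrArg (d⁄dX ℂ) h1
    simp only [Derivation.leibniz, PowerSeries.derivative_coe, smul_eq_mul] at this
    have hder : Polynomial.derivative ((n : ℂ[X]) * R) = (n : ℂ[X]) * Polynomial.derivative R := by
      rw [Polynomial.derivative_mul]; simp
    rw [hder] at this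
    have hcn : ((n : ℂ[X]) : ℂ⟦X⟧) = (n : ℂ⟦X⟧) := by
      rw [← Polynomial.coeToPowerSeries.ringHom_apply, map_natCast]
    push_cast [hcn] at this ⊢
    linear_combination this
  have hcn : ((n : ℂ[X]) : ℂ⟦X⟧) = (n : ℂ⟦X⟧) := by
    rw [← Polynomial.coeToPowerSeries.ringHom_apply, map_natCast]
  have hP0 : (P : ℂ⟦X⟧) ≠ 0 := by
    intro h
    have h0 : PowerSeries.constantCoeff (P : ℂ⟦X⟧) = 1 := by
      rw [Polynomial.constantCoeff_coe, Polynomial.coeff_zero_eq_eval_zero, hPdef,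
        Polynomial.eval_prod]
      simp
    rw [h] at h0
    simp at h0
  have hR : (n : ℂ⟦X⟧) * (R : ℂ⟦X⟧) = (P : ℂ⟦X⟧) * F := by
    rw [h1]; push_cast [hcn]; ring
  have h2c : (R : ℂ⟦X⟧) * G = ((n : ℂ⟦X⟧) - 1) * (R : ℂ⟦X⟧)
      - PowerSeries.X * ((Polynomial.derivative R : ℂ[X]) : ℂ⟦X⟧) := by
    rw [h2]; push_cast [hcn]; ring
  have h5 : PowerSeries.X * ((Polynomial.derivative P : ℂ[X]) : ℂ⟦X⟧)
      = (n : ℂ⟦X⟧) * (P : ℂ⟦X⟧) - (P : ℂ⟦X⟧) * F := by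
    have hAc := congrArg (fun q : ℂ[X] => (q : ℂ⟦X⟧)) hA
    push_cast [hcn] at hAc
    rw [← hR]
    linear_combination -hAc
  refine mul_left_cancel₀ (mul_ne_zero hP0 hP0) ?_
  linear_combination ((n : ℂ⟦X⟧) * (P : ℂ⟦X⟧)) * h2c
    + (((n : ℂ⟦X⟧) - 1) * (P : ℂ⟦X⟧) - (P : ℂ⟦X⟧) * G) * hR
    - ((P : ℂ⟦X⟧) * F) * h5 + (PowerSeries.X * (P : ℂ⟦X⟧)) * h4

lemma factA (n : ℕ) (hn : 2 ≤ n) (x : Fin n → ℂ) (y : Fin (n-1) → ℂ)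
    (hq : Polynomial.derivative (∏ j, (Polynomial.X - Polynomial.C (x j)))
      = Polynomial.C (n : ℂ) * ∏ j, (Polynomial.X - Polynomial.C (y j))) (m : ℕ) :
    (n : ℂ) * ((∑ j, x j ^ (m+1)) - (∑ j, y j ^ (m+1)))
      = ((m : ℂ) + 1) * (∑ j, x j ^ (m+1))
        - ∑ i ∈ range m, (∑ j, x j ^ (i+1)) *
            ((∑ j, x j ^ (m-i)) - (∑ j, y j ^ (m-i))) := by
  have hFG := FG_identity n hn x y hq
  set S : ℕ → ℂ := fun t => ∑ j, x j ^ t with hS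
  set Q : ℕ → ℂ := fun t => ∑ j, y j ^ t with hQ
  set F : ℂ⟦X⟧ := PowerSeries.mk S with hF
  set G : ℂ⟦X⟧ := PowerSeries.mk Q with hG
  have hc1 : (PowerSeries.coeff (m+1)) (F * G)
      = ∑ i ∈ range (m+2), S i * Q (m+1-i) := by
    rw [PowerSeries.coeff_mul, Finset.Nat.sum_antidiagonal_eq_sum_range_succ_mk]
    simp [hF, hG, PowerSeries.coeff_mk]
  have hc2 : (PowerSeries.coeff (m+1)) (F * F)
      = ∑ i ∈ range (m+2), S i * S (m+1-i) := by
    rw [PowerSeries.coeff_mul, Finset.Nat.sum_antidiagonal_eq_sum_range_succ_mk]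
    simp [hF, PowerSeries.coeff_mk]
  have hc3 : (PowerSeries.coeff (m+1)) (PowerSeries.X * (d⁄dX ℂ F))
      = ((m:ℂ)+1) * S (m+1) := by
    rw [PowerSeries.coeff_succ_X_mul, PowerSeries.coeff_derivative]
    have : (PowerSeries.coeff (m+1)) F = S (m+1) := by simp [hF, PowerSeries.coeff_mk]
    rw [this]
    push_cast
    ring
  have hc : ∑ i ∈ range (m+2), S i * Q (m+1-i)
      = ∑ i ∈ range (m+2), S i * S (m+1-i) - S (m+1) - ((m:ℂ)+1) * S (m+1) := by
    have h := congrArg (PowerSeries.coeff (m+1)) hFG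
    rw [map_sub, map_sub, hc1, hc2, hc3] at h
    have hcm : (PowerSeries.coeff (m+1)) F = S (m+1) := by simp [hF, PowerSeries.coeff_mk]
    rw [hcm] at h
    exact h
  have hS0 : S 0 = (n : ℂ) := by simp [hS]
  have hQ0 : Q 0 = (n : ℂ) - 1 := by
    simp only [hQ, pow_zero, Finset.sum_const, card_univ, Fintype.card_fin, nsmul_eq_mul, mul_one]
    rw [Nat.cast_sub (by omega : 1 ≤ n)]
    simp
  have p1 : ∑ i ∈ range (m+2), S i * Q (m+1-i)
      = S 0 * Q (m+1) + (∑ i ∈ range m, S (i+1) * Q (m-i)) + S (m+1) * Q 0 := by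
    rw [Finset.sum_range_succ, Finset.sum_range_succ']
    simp only [Nat.succ_sub_succ, Nat.sub_self, Nat.sub_zero]
    ring
  have p2 : ∑ i ∈ range (m+2), S i * S (m+1-i)
      = S 0 * S (m+1) + (∑ i ∈ range m, S (i+1) * S (m-i)) + S (m+1) * S 0 := by
    rw [Finset.sum_range_succ, Finset.sum_range_succ']
    simp only [Nat.succ_sub_succ, Nat.sub_self, Nat.sub_zero]
    ring
  have hsplit : ∑ i ∈ range m, S (i+1) * (S (m-i) - Q (m-i))
      = (∑ i ∈ range m, S (i+1) * S (m-i)) - ∑ i ∈ range m, S (i+1) * Q (m-i) := by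
    rw [← Finset.sum_sub_distrib]
    exact Finset.sum_congr rfl fun i _ => mul_sub _ _ _
  rw [p1, p2, hS0, hQ0] at hc
  rw [hsplit]
  linear_combination -hc

lemma geom_two_sum (m : ℕ) : ∑ i ∈ range m, (2:ℝ)^(i+1) ≤ 2^(m+1) := by
  have h : ∑ i ∈ range m, (2:ℝ)^(i+1) = 2 * ∑ i ∈ range m, (2:ℝ)^i := by
    rw [Finset.mul_sum]
    exact Finset.sum_congr rfl fun i _ => by ring
  rw [h, geom_sum_eq (by norm_num : (2:ℝ) ≠ 1)]
  have : (2:ℝ)^m ≥ 1 := one_le_pow₀ (by norm_num)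
  rw [pow_succ]
  nlinarith [pow_pos (by norm_num : (0:ℝ) < 2) m]

lemma sum_bound (m : ℕ) (T : ℝ) (hT : 1 ≤ T) :
    ∑ i ∈ range m, T^(i+1) * ((((m-i:ℕ)):ℝ) * 2^(m-i) * T^(m-i))
      ≤ (m:ℝ) * 2^(m+1) * T^(m+1) := by
  have hT0 : (0:ℝ) < T := lt_of_lt_of_le one_pos hT
  have step1 : ∑ i ∈ range m, T^(i+1) * ((((m-i:ℕ)):ℝ) * 2^(m-i) * T^(m-i))
      = T^(m+1) * ∑ i ∈ range m, (((m-i:ℕ)):ℝ) * 2^(m-i) := by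
    rw [Finset.mul_sum]
    refine Finset.sum_congr rfl fun i hi => ?_
    have hi' : i < m := Finset.mem_range.mp hi
    have : (i+1) + (m-i) = m+1 := by omega
    rw [← this, pow_add]
    ring
  rw [step1]
  have step2 : ∑ i ∈ range m, (((m-i:ℕ)):ℝ) * 2^(m-i) ≤ (m:ℝ) * 2^(m+1) := by
    calc ∑ i ∈ range m, (((m-i:ℕ)):ℝ) * 2^(m-i)
        ≤ ∑ i ∈ range m, (m:ℝ) * 2^(m-i) := by
          refine Finset.sum_le_sum fun i hi => ?_
          have : ((m-i:ℕ):ℝ) ≤ (m:ℝ) := by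
            exact_mod_cast Nat.cast_le.mpr (Nat.sub_le m i)
          exact mul_le_mul_of_nonneg_right this (by positivity)
      _ = (m:ℝ) * ∑ i ∈ range m, (2:ℝ)^(m-i) := by rw [Finset.mul_sum]
      _ ≤ (m:ℝ) * 2^(m+1) := by
          refine mul_le_mul_of_nonneg_left ?_ (Nat.cast_nonneg m)
          have hre : ∑ i ∈ range m, (2:ℝ)^(m-i) = ∑ i ∈ range m, (2:ℝ)^(i+1) := by
            rw [← Finset.sum_range_reflect]
            refine Finset.sum_congr rfl fun i hi => ?_
            have hi' : i < m := Finset.mem_range.mp hi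
            congr 1
            omega
          rw [hre]
          exact geom_two_sum m
  calc T^(m+1) * ∑ i ∈ range m, (((m-i:ℕ)):ℝ) * 2^(m-i)
      ≤ T^(m+1) * ((m:ℝ) * 2^(m+1)) := by
        exact mul_le_mul_of_nonneg_left step2 (by positivity)
    _ = (m:ℝ) * 2^(m+1) * T^(m+1) := by ring


section main
variable (n : ℕ) (x : Fin n → ℂ) (y : Fin (n-1) → ℂ)

lemma Sbound (τ : ℝ) (hx : ∀ j, ‖x j‖ ≤ τ) (t : ℕ) :
    ‖∑ j, x j ^ t‖ ≤ (n:ℝ) * (max τ 1)^t := by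
  calc ‖∑ j, x j ^ t‖ ≤ ∑ j, ‖x j ^ t‖ :=
        norm_sum_le _ _
    _ ≤ ∑ _j : Fin n, (max τ 1)^t := by
        refine Finset.sum_le_sum fun j _ => ?_
        rw [norm_pow]
        exact pow_le_pow_left₀ (norm_nonneg _)
          (le_trans (hx j) (le_max_left _ _)) t
    _ = (n:ℝ) * (max τ 1)^t := by
        rw [Finset.sum_const, card_univ, Fintype.card_fin, nsmul_eq_mul]

lemma Dbound (τ : ℝ) (hn : 2 ≤ n) (hx : ∀ j, ‖x j‖ ≤ τ)
    (hq : Polynomial.derivative (∏ j, (Polynomial.X - Polynomial.C (x j)))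
      = Polynomial.C (n : ℂ) * ∏ j, (Polynomial.X - Polynomial.C (y j))) :
    ∀ m : ℕ, ‖(∑ j, x j ^ (m+1)) - (∑ j, y j ^ (m+1))‖
      ≤ ((m:ℝ)+1) * 2^(m+1) * (max τ 1)^(m+1) := by
  intro m
  induction m using Nat.strong_induction_on with
  | _ m IH =>
    set T := max τ 1 with hTdef
    have hT : (1:ℝ) ≤ T := le_max_right _ _
    have hT0 : (0:ℝ) < T := lt_of_lt_of_le one_pos hT
    have hn0 : (0:ℝ) < (n:ℝ) := by positivity
    have key := factA n hn x y hq m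
    have habs : (n:ℝ) * ‖(∑ j, x j ^ (m+1)) - (∑ j, y j ^ (m+1))‖
        = ‖(n:ℂ) * ((∑ j, x j ^ (m+1)) - (∑ j, y j ^ (m+1)))‖ := by
      rw [norm_mul, Complex.norm_natCast]
    have hbound : ‖(n:ℂ) * ((∑ j, x j ^ (m+1)) - (∑ j, y j ^ (m+1)))‖
        ≤ (n:ℝ) * (((m:ℝ)+1) * 2^(m+1) * T^(m+1)) := by
      rw [key]
      calc ‖((m : ℂ) + 1) * (∑ j, x j ^ (m+1))
            - ∑ i ∈ range m, (∑ j, x j ^ (i+1)) *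
                ((∑ j, x j ^ (m-i)) - (∑ j, y j ^ (m-i)))‖
          ≤ ‖((m : ℂ) + 1) * (∑ j, x j ^ (m+1))‖
            + ‖∑ i ∈ range m, (∑ j, x j ^ (i+1)) *
                ((∑ j, x j ^ (m-i)) - (∑ j, y j ^ (m-i)))‖ := norm_sub_le _ _
        _ ≤ ((m:ℝ)+1) * ((n:ℝ) * T^(m+1))
            + ∑ i ∈ range m, ((n:ℝ) * T^(i+1)) *
                ((((m-i:ℕ)):ℝ) * 2^(m-i) * T^(m-i)) := by
            refine add_le_add ?_ ?_
            · rw [norm_mul]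
              have h1 : ‖(m:ℂ)+1‖ = (m:ℝ)+1 := by
                rw [show ((m:ℂ)+1) = (((m+1:ℕ)):ℂ) by push_cast; ring, Complex.norm_natCast]
                push_cast; ring
              rw [h1]
              exact mul_le_mul_of_nonneg_left (Sbound n x τ hx (m+1)) (by positivity)
            · refine le_trans (norm_sum_le _ _) (Finset.sum_le_sum fun i hi => ?_)
              have hi' : i < m := Finset.mem_range.mp hi
              rw [norm_mul]
              refine mul_le_mul (Sbound n x τ hx (i+1)) ?_ (norm_nonneg _) (by positivity)
              have e1 : m - 1 - i + 1 = m - i := by omega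
              have hIH := IH (m-1-i) (by omega)
              rw [e1] at hIH
              have e2 : ((m-1-i:ℕ):ℝ) + 1 = ((m-i:ℕ):ℝ) := by
                have : (m-1-i) + 1 = m - i := by omega
                exact_mod_cast congrArg (Nat.cast (R := ℝ)) this
              rw [e2] at hIH
              exact hIH
        _ ≤ ((m:ℝ)+1) * ((n:ℝ) * T^(m+1)) + (n:ℝ) * ((m:ℝ) * 2^(m+1) * T^(m+1)) := by
            refine add_le_add_right ?_ _
            have : ∑ i ∈ range m, ((n:ℝ) * T^(i+1)) * ((((m-i:ℕ)):ℝ) * 2^(m-i) * T^(m-i))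
                = (n:ℝ) * ∑ i ∈ range m, T^(i+1) * ((((m-i:ℕ)):ℝ) * 2^(m-i) * T^(m-i)) := by
              rw [Finset.mul_sum]
              exact Finset.sum_congr rfl fun i _ => by ring
            rw [this]
            exact mul_le_mul_of_nonneg_left (sum_bound m T hT) (le_of_lt hn0)
        _ ≤ (n:ℝ) * (((m:ℝ)+1) * 2^(m+1) * T^(m+1)) := by
            have h2 : (m:ℝ)+1 ≤ 2^(m+1) := by
              have := Nat.lt_two_pow_self (n := m+1)
              have : ((m+1:ℕ):ℝ) ≤ ((2^(m+1):ℕ):ℝ) := by exact_mod_cast le_of_lt this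
              push_cast at this
              linarith
            nlinarith [pow_pos hT0 (m+1), pow_pos (show (0:ℝ) < 2 by norm_num) (m+1),
              mul_nonneg (le_of_lt hn0) (mul_nonneg (le_of_lt (pow_pos hT0 (m+1)))
                (le_of_lt (pow_pos (show (0:ℝ) < 2 by norm_num) (m+1))))]
    refine le_of_mul_le_mul_left ?_ hn0
    rw [habs]
    exact hbound


lemma SigBound (τ : ℝ) (hn : 2 ≤ n) (hx : ∀ j, ‖x j‖ ≤ τ)
    (hq : Polynomial.derivative (∏ j, (Polynomial.X - Polynomial.C (x j)))
      = Polynomial.C (n : ℂ) * ∏ j, (Polynomial.X - Polynomial.C (y j))) (m : ℕ) :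
    ‖∑ i ∈ range m, (∑ j, x j ^ (i+1)) *
        ((∑ j, x j ^ (m-i)) - (∑ j, y j ^ (m-i)))‖
      ≤ (n:ℝ) * ((m:ℝ) * 2^(m+1) * (max τ 1)^(m+1)) := by
  set T := max τ 1 with hTdef
  have hT : (1:ℝ) ≤ T := le_max_right _ _
  have hn0 : (0:ℝ) ≤ (n:ℝ) := Nat.cast_nonneg n
  calc ‖∑ i ∈ range m, (∑ j, x j ^ (i+1)) *
        ((∑ j, x j ^ (m-i)) - (∑ j, y j ^ (m-i)))‖
      ≤ ∑ i ∈ range m, ((n:ℝ) * T^(i+1)) *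
          ((((m-i:ℕ)):ℝ) * 2^(m-i) * T^(m-i)) := by
        refine le_trans (norm_sum_le _ _) (Finset.sum_le_sum fun i hi => ?_)
        have hi' : i < m := Finset.mem_range.mp hi
        rw [norm_mul]
        refine mul_le_mul (Sbound n x τ hx (i+1)) ?_ (norm_nonneg _) (by positivity)
        have e1 : m - 1 - i + 1 = m - i := by omega
        have hIH := Dbound n x y τ hn hx hq (m-1-i)
        rw [e1] at hIH
        have e2 : ((m-1-i:ℕ):ℝ) + 1 = ((m-i:ℕ):ℝ) := by
          have h3 : (m-1-i) + 1 = m - i := by omega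
          exact_mod_cast congrArg (Nat.cast (R := ℝ)) h3
        rw [e2] at hIH
        exact hIH
    _ = (n:ℝ) * ∑ i ∈ range m, T^(i+1) * ((((m-i:ℕ)):ℝ) * 2^(m-i) * T^(m-i)) := by
        rw [Finset.mul_sum]
        exact Finset.sum_congr rfl fun i _ => by ring
    _ ≤ (n:ℝ) * ((m:ℝ) * 2^(m+1) * T^(m+1)) :=
        mul_le_mul_of_nonneg_left (sum_bound m T hT) hn0


end main

theorem moments_of_critical_points (τ : ℝ) (k : ℕ) (hk : 1 ≤ k) :
    ∃ C : ℝ, 0 < C ∧ ∀ (n : ℕ), 2 ≤ n → ∀ x : Fin n → ℂ,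
      (∀ j, ‖x j‖ ≤ τ) →
      ∀ y : Fin (n - 1) → ℂ,
        (Multiset.map y Finset.univ.val : Multiset ℂ)
          = (Polynomial.derivative (∏ j, (Polynomial.X - Polynomial.C (x j)))).roots →
        ‖(n : ℂ)⁻¹ * ∑ j, (x j) ^ k - ((n : ℂ) - 1)⁻¹ * ∑ j, (y j) ^ k‖
          ≤ C / ((n : ℝ) - 1) := by
  obtain ⟨k', rfl⟩ : ∃ k', k = k'+1 := ⟨k-1, by omega⟩
  set T := max τ 1 with hTdef
  have hT : (1:ℝ) ≤ T := le_max_right _ _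
  have hT0 : (0:ℝ) < T := lt_of_lt_of_le one_pos hT
  refine ⟨((k':ℝ)+1) * 2^(k'+2) * T^(k'+1), by positivity, ?_⟩
  intro n hn x hx y hy
  have hq := derivEqAux n hn x y hy
  have key := factA n hn x y hq k'
  have hnC : (n:ℂ) ≠ 0 := Nat.cast_ne_zero.mpr (by omega)
  have hcast : ((n:ℂ) - 1) = ((n-1:ℕ):ℂ) := by
    rw [Nat.cast_sub (by omega : 1 ≤ n)]; simp
  have hn1C : ((n:ℂ) - 1) ≠ 0 := by
    rw [hcast]; exact Nat.cast_ne_zero.mpr (by omega)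
  have heq : (n:ℂ)⁻¹ * (∑ j, x j ^ (k'+1)) - ((n:ℂ)-1)⁻¹ * (∑ j, y j ^ (k'+1))
      = (((n:ℂ)-1) * (∑ j, x j ^ (k'+1)) - (n:ℂ) * (∑ j, y j ^ (k'+1)))
        / ((n:ℂ) * ((n:ℂ)-1)) := by
    field_simp
  have hident : ((n:ℂ)-1) * (∑ j, x j ^ (k'+1)) - (n:ℂ) * (∑ j, y j ^ (k'+1))
      = (k':ℂ) * (∑ j, x j ^ (k'+1))
        - ∑ i ∈ range k', (∑ j, x j ^ (i+1)) *
            ((∑ j, x j ^ (k'-i)) - (∑ j, y j ^ (k'-i))) := by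
    linear_combination key
  have hnum : ‖((n:ℂ)-1) * (∑ j, x j ^ (k'+1)) - (n:ℂ) * (∑ j, y j ^ (k'+1))‖
      ≤ (n:ℝ) * (((k':ℝ)+1) * 2^(k'+2) * T^(k'+1)) := by
    rw [hident]
    have h1 : ‖(k':ℂ) * (∑ j, x j ^ (k'+1))‖ ≤ (k':ℝ) * ((n:ℝ) * T^(k'+1)) := by
      rw [norm_mul, Complex.norm_natCast]
      exact mul_le_mul_of_nonneg_left (Sbound n x τ hx (k'+1)) (Nat.cast_nonneg _)
    have h2 := SigBound n x y τ hn hx hq k'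
    rw [← hTdef] at h2
    refine le_trans (norm_sub_le _ _) ?_
    have hP : (1:ℝ) ≤ 2^(k'+1) := one_le_pow₀ (by norm_num)
    have hTp : (0:ℝ) < T^(k'+1) := pow_pos hT0 _
    have hnn : (0:ℝ) ≤ (n:ℝ) := Nat.cast_nonneg _
    have hkk : (0:ℝ) ≤ (k':ℝ) := Nat.cast_nonneg _
    have goal2 : (k':ℝ) * ((n:ℝ) * T^(k'+1)) + (n:ℝ) * ((k':ℝ) * 2^(k'+1) * T^(k'+1))
        ≤ (n:ℝ) * (((k':ℝ)+1) * 2^(k'+2) * T^(k'+1)) := by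
      have e : (2:ℝ)^(k'+2) = 2 * 2^(k'+1) := by ring
      rw [e]
      nlinarith [mul_nonneg (mul_nonneg hnn hTp.le) (mul_nonneg hkk (sub_nonneg.mpr hP)),
        mul_nonneg (mul_nonneg hnn hTp.le) (by positivity : (0:ℝ) ≤ 2 * 2^(k'+1))]
    linarith [add_le_add h1 h2]
  rw [heq, norm_div, norm_mul, Complex.norm_natCast]
  have habs1 : ‖(n:ℂ)-1‖ = (n:ℝ)-1 := by
    rw [hcast, Complex.norm_natCast, Nat.cast_sub (by omega : 1 ≤ n)]
    simp
  rw [habs1]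
  have hd : (0:ℝ) < (n:ℝ) - 1 := by
    have : (2:ℝ) ≤ (n:ℝ) := by exact_mod_cast hn
    linarith
  have hn0 : (0:ℝ) < (n:ℝ) := by positivity
  calc ‖((n:ℂ)-1) * (∑ j, x j ^ (k'+1)) - (n:ℂ) * (∑ j, y j ^ (k'+1))‖
        / ((n:ℝ) * ((n:ℝ)-1))
      ≤ ((n:ℝ) * (((k':ℝ)+1) * 2^(k'+2) * T^(k'+1))) / ((n:ℝ) * ((n:ℝ)-1)) := by
        exact (div_le_div_iff_of_pos_right (by positivity)).mpr hnum
    _ = (((k':ℝ)+1) * 2^(k'+2) * T^(k'+1)) / ((n:ℝ)-1) := by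
        rw [mul_div_mul_left _ _ (ne_of_gt hn0)]
end
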